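/- arXiv:2104.03205 — 2 statements merged into one kernel-verified Lean document; each statement's English description precedes it below -/
import Mathlib

section
/- For the multinomial dimer model on a 4-cycle with vertices {1,2,3,4}, unit edge weights, and feasible densities α with α₁+α₃ = 1 = α₂+α₄, the exponential growth rate is σ(α) = h(α₁) + h(α₂), where h(p) = −p log p − (1−p) log(1−p). -/
open Real

lemma key_ineq (t a c : ℝ) (ht : 0 < t) (ht' : t < 1) :
    t * a + (1 - t) * c - Real.log (Real.exp a + Real.exp c)
      ≤ t * Real.log t + (1 - t) * Real.log (1 - t) := by
  have ht1 : 0 < 1 - t := by linarith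
  have hx : Real.exp a / t ∈ Set.Ioi (0:ℝ) := div_pos (exp_pos a) ht
  have hy : Real.exp c / (1 - t) ∈ Set.Ioi (0:ℝ) := div_pos (exp_pos c) ht1
  have hcc := (strictConcaveOn_log_Ioi.concaveOn).2 hx hy ht.le ht1.le (by ring)
  simp only [smul_eq_mul] at hcc
  have e1 : t * (Real.exp a / t) + (1 - t) * (Real.exp c / (1 - t))
      = Real.exp a + Real.exp c := by field_simp
  rw [e1] at hcc
  have l1 : Real.log (Real.exp a / t) = a - Real.log t := by
    rw [Real.log_div (exp_ne_zero a) ht.ne', Real.log_exp]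
  have l2 : Real.log (Real.exp c / (1 - t)) = c - Real.log (1 - t) := by
    rw [Real.log_div (exp_ne_zero c) ht1.ne', Real.log_exp]
  rw [l1, l2] at hcc
  nlinarith [hcc]

/-- for the multinomial dimer model on the 4-cycle with
P = (x₁+x₃)(x₂+x₄), feasible densities α₁+α₃ = 1 = α₂+α₄ with 0<α₁,α₂<1, the
growth rate is σ(α) = h(α₁)+h(α₂), i.e. S(α) = sup_X {−log P(e^X)+Σα_vX_v}
equals −(h(α₁)+h(α₂)) where h(p) = −p log p − (1−p) log(1−p). -/
theorem stmt6 (α₁ α₂ : ℝ) (h₁ : 0 < α₁) (h₁' : α₁ < 1) (h₂ : 0 < α₂) (h₂' : α₂ < 1) :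
    IsLUB {y : ℝ | ∃ a b c d : ℝ,
        y = -Real.log ((Real.exp a + Real.exp c) * (Real.exp b + Real.exp d))
          + α₁ * a + α₂ * b + (1 - α₁) * c + (1 - α₂) * d}
      (-((-(α₁ * Real.log α₁) - (1 - α₁) * Real.log (1 - α₁))
        + (-(α₂ * Real.log α₂) - (1 - α₂) * Real.log (1 - α₂)))) := by
  have h₁1 : 0 < 1 - α₁ := by linarith
  have h₂1 : 0 < 1 - α₂ := by linarith
  have hmem : (-((-(α₁ * Real.log α₁) - (1 - α₁) * Real.log (1 - α₁))
        + (-(α₂ * Real.log α₂) - (1 - α₂) * Real.log (1 - α₂))))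
      ∈ {y : ℝ | ∃ a b c d : ℝ,
        y = -Real.log ((Real.exp a + Real.exp c) * (Real.exp b + Real.exp d))
          + α₁ * a + α₂ * b + (1 - α₁) * c + (1 - α₂) * d} := by
    refine ⟨Real.log α₁, Real.log α₂, Real.log (1 - α₁), Real.log (1 - α₂), ?_⟩
    rw [Real.exp_log h₁, Real.exp_log h₂, Real.exp_log h₁1, Real.exp_log h₂1]
    norm_num
    ring
  constructor
  · rintro y ⟨a, b, c, d, rfl⟩
    have hp1 : 0 < Real.exp a + Real.exp c := by positivity
    have hp2 : 0 < Real.exp b + Real.exp d := by positivity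
    rw [Real.log_mul hp1.ne' hp2.ne']
    have k1 := key_ineq α₁ a c h₁ h₁'
    have k2 := key_ineq α₂ b d h₂ h₂'
    linarith
  · intro u hu
    exact hu hmem
end

section
/- The Mittag-Leffler expansion: for all real z ≠ 0, π·coth(πz) = 1/z + 2·Σ_{n=1}^∞ z/(z² + n²). -/
open Complex Real intervalIntegral

noncomputable def mlF (z : ℝ) (x : ℝ) : ℂ := Complex.cosh (2 * Real.pi * z * (x - 1/2))


lemma ml_coeff (z : ℝ) (hz : z ≠ 0) (n : ℤ) :
    fourierCoeffOn (zero_lt_one' ℝ) (mlF z) n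
      = (Complex.sinh (Real.pi * z) * z) / (Real.pi * ((z:ℂ)^2 + (n:ℂ)^2)) := by
  have hπ : (Real.pi : ℂ) ≠ 0 := Complex.ofReal_ne_zero.mpr Real.pi_ne_zero
  have hz' : (z : ℂ) ≠ 0 := Complex.ofReal_ne_zero.mpr hz
  set c1 : ℂ := 2 * Real.pi * (z - Complex.I * n) with hc1def
  set c2 : ℂ := -(2 * Real.pi * (z + Complex.I * n)) with hc2def
  have hc1 : c1 ≠ 0 := by
    rw [hc1def]
    refine mul_ne_zero (by norm_num [hπ]) ?_
    intro h
    apply hz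
    have := congrArg Complex.re h
    simpa using this
  have hc2 : c2 ≠ 0 := by
    rw [hc2def]
    refine neg_ne_zero.mpr (mul_ne_zero (by norm_num [hπ]) ?_)
    intro h
    apply hz
    have := congrArg Complex.re h
    simpa using this
  have hzn : (z:ℂ)^2 + (n:ℂ)^2 ≠ 0 := by
    have : ((z^2 + (n:ℝ)^2 : ℝ) : ℂ) ≠ 0 := by
      rw [Complex.ofReal_ne_zero]
      positivity
    push_cast at this
    convert this using 2 <;> norm_cast
  rw [fourierCoeffOn_eq_integral]
  have hptwise : ∀ x ∈ Set.uIcc (0:ℝ) 1,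
      (fourier (-n) (x : AddCircle (1 - 0 : ℝ))) • mlF z x
        = Complex.exp (-(Real.pi * z)) / 2 * Complex.exp (c1 * x)
          + Complex.exp (Real.pi * z) / 2 * Complex.exp (c2 * x) := by
    intro x _
    rw [fourier_coe_apply]
    rw [smul_eq_mul, mlF, Complex.cosh]
    field_simp
    rw [mul_add, ← Complex.exp_add, ← Complex.exp_add, ← Complex.exp_add, ← Complex.exp_add]
    push_cast
    ring_nf
    rw [hc1def, hc2def]
    congr 1 <;> congr 1 <;> ring
  rw [intervalIntegral.integral_congr hptwise]
  have hint : ∀ c d : ℂ, IntervalIntegrable (fun x:ℝ => c * Complex.exp (d*x)) MeasureTheory.volume 0 1 := by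
    intro c d
    apply Continuous.intervalIntegrable
    fun_prop
  rw [intervalIntegral.integral_add (hint _ _) (hint _ _)]
  rw [intervalIntegral.integral_const_mul, intervalIntegral.integral_const_mul,
    integral_exp_mul_complex hc1, integral_exp_mul_complex hc2]
  have hexp : Complex.exp (-(n:ℂ) * (2 * Real.pi * Complex.I)) = 1 := by
    have := Complex.exp_int_mul_two_pi_mul_I (-n)
    push_cast at this
    simpa using this
  have e1 : Complex.exp c1 = Complex.exp (Real.pi * z) * Complex.exp (Real.pi * z) := by
    have h : c1 = (Real.pi * z : ℂ) + ((Real.pi * z : ℂ) + (-(n:ℂ)) * (2 * Real.pi * Complex.I)) := by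
      rw [hc1def]; push_cast; ring
    rw [h, Complex.exp_add, Complex.exp_add, hexp, mul_one]
  have e2 : Complex.exp c2 = Complex.exp (-(Real.pi * z)) * Complex.exp (-(Real.pi * z)) := by
    have h : c2 = -(Real.pi * z : ℂ) + (-(Real.pi * z : ℂ) + (-(n:ℂ)) * (2 * Real.pi * Complex.I)) := by
      rw [hc2def]; push_cast; ring
    rw [h, Complex.exp_add, Complex.exp_add, hexp, mul_one]
  have e3 : Complex.exp (Real.pi * z) * Complex.exp (-(Real.pi * z)) = 1 := by
    rw [← Complex.exp_add]; simp
  have hc12 : c1 * c2 = -((2*(Real.pi:ℂ))^2 * ((z:ℂ)^2 + (n:ℂ)^2)) := by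
    rw [hc1def, hc2def]
    have h2 : Complex.I^2 = -1 := Complex.I_sq
    linear_combination (4*(Real.pi:ℂ)^2*(n:ℂ)^2) * h2
  have hsub : c2 - c1 = -(4*(Real.pi:ℂ)*z) := by rw [hc1def, hc2def]; ring
  set u := Complex.exp (Real.pi * z) with hu
  set v := Complex.exp (-(Real.pi * z)) with hv
  have key : v*(u*u-1)*c2 + u*(v*v-1)*c1 = (u - v)*(c2 - c1) := by
    linear_combination (c2*u + c1*v) * e3
  simp only [Complex.ofReal_one, Complex.ofReal_zero, mul_one, mul_zero, Complex.exp_zero]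
  rw [e1, e2]
  simp only [Complex.sinh, ← hu, ← hv, sub_zero, smul_eq_mul, one_div, inv_one, one_mul, one_smul]
  have hstep : v/2*((u*u-1)/c1) + u/2*((v*v-1)/c2)
      = (v*(u*u-1)*c2 + u*(v*v-1)*c1)/(2*(c1*c2)) := by
    field_simp
  rw [hstep, key, hsub, hc12]
  field_simp
  ring

/-- Mittag-Leffler expansion: for real z ≠ 0,
π coth(πz) = 1/z + 2 Σ_{n≥1} z/(z²+n²). -/
theorem stmt17 (z : ℝ) (hz : z ≠ 0) :
    Real.pi * (Real.cosh (Real.pi * z) / Real.sinh (Real.pi * z))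
      = 1 / z + 2 * ∑' n : ℕ, z / (z ^ 2 + ((n : ℝ) + 1) ^ 2) := by
  have hπ : Real.pi ≠ 0 := Real.pi_ne_zero
  have hπz : Real.pi * z ≠ 0 := mul_ne_zero hπ hz
  have hK : Real.sinh (Real.pi * z) ≠ 0 := Real.sinh_ne_zero.mpr hπz
  set K := Real.sinh (Real.pi * z) with hKdef
  set cR : ℤ → ℝ := fun n => K * z / (Real.pi * (z^2 + (n:ℝ)^2)) with hcRdef
  -- the periodized function
  have hcont : Continuous (AddCircle.liftIco 1 0 (mlF z)) := by
    apply AddCircle.liftIco_zero_continuous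
    · show mlF z 0 = mlF z 1
      simp only [mlF]
      norm_num
    · apply Continuous.continuousOn
      unfold mlF
      fun_prop
  set G : C(AddCircle (1:ℝ), ℂ) := ⟨_, hcont⟩ with hGdef
  have step1 : ∀ n : ℤ, fourierCoeff (⇑G) n = ((cR n : ℝ) : ℂ) := by
    intro n
    rw [hGdef, ContinuousMap.coe_mk, fourierCoeff_liftIco_eq]
    have := ml_coeff z hz n
    simp only [zero_add] at this ⊢
    rw [this, hcRdef, hKdef]
    try push_cast [Complex.ofReal_sinh]
    try ring
  -- summability
  have hsumR : Summable cR := by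
    have base : Summable (fun n:ℤ => 1/(n:ℝ)^2) := summable_one_div_int_pow.mpr one_lt_two
    have : Summable (fun n:ℤ => K * z / Real.pi * (1/(z^2 + (n:ℝ)^2))) := by
      apply Summable.mul_left
      apply Summable.of_norm_bounded_eventually base
      rw [Filter.eventually_cofinite]
      apply Set.Finite.subset (Set.finite_singleton (0:ℤ))
      intro n hn
      simp only [Set.mem_singleton_iff]
      by_contra hn0
      apply hn
      have hn2 : (0:ℝ) < (n:ℝ)^2 := by
        have : (n:ℝ) ≠ 0 := Int.cast_ne_zero.mpr hn0
        positivity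
      have hpos : (0:ℝ) < z^2 + (n:ℝ)^2 := by positivity
      rw [norm_of_nonneg (by positivity)]
      apply one_div_le_one_div_of_le hn2
      nlinarith [sq_nonneg z]
    apply this.congr
    intro n
    rw [hcRdef]
    field_simp
  have hsumC : Summable (fourierCoeff (⇑G)) := by
    apply Summable.congr _ (fun n => (step1 n).symm)
    exact (Complex.summable_ofReal.mpr hsumR)
  -- pointwise sum at 0
  have h0 := has_pointwise_sum_fourier_series_of_summable hsumC (0 : AddCircle (1:ℝ))
  have hG0 : G (0 : AddCircle (1:ℝ)) = ((Real.cosh (Real.pi * z) : ℝ) : ℂ) := by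
    rw [hGdef, ContinuousMap.coe_mk, show (0 : AddCircle (1:ℝ)) = ((0:ℝ) : AddCircle (1:ℝ)) from rfl,
      AddCircle.liftIco_coe_apply (by norm_num : (0:ℝ) ∈ Set.Ico (0:ℝ) (0+1))]
    simp only [mlF]
    push_cast [Complex.ofReal_cosh]
    rw [show (2 * (Real.pi:ℂ) * z * (0 - 1/2)) = -((Real.pi:ℂ) * z) by ring, Complex.cosh_neg]
  rw [hG0] at h0
  have h1 : HasSum cR (Real.cosh (Real.pi * z)) := by
    rw [← Complex.hasSum_ofReal]
    have heq : (fun i:ℤ => fourierCoeff (⇑G) i • fourier i (0:AddCircle (1:ℝ)))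
        = fun n:ℤ => ((cR n : ℝ) : ℂ) := by
      funext n
      rw [step1 n, fourier_eval_zero, smul_eq_mul, mul_one]
    exact heq ▸ h0
  have h2 : HasSum (fun n:ℕ => 2 * cR n) (Real.cosh (Real.pi * z) + cR 0) := by
    have heq : (fun n:ℕ => cR n + cR (-(n:ℤ))) = fun n:ℕ => 2 * cR n := by
      funext n
      rw [hcRdef]
      push_cast
      rw [neg_sq]
      ring
    exact heq ▸ h1.nat_add_neg
  have h3 : HasSum (fun n:ℕ => 2 * cR ((n:ℤ)+1)) (Real.cosh (Real.pi * z) - cR 0) := by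
    have h2' : HasSum (fun n:ℕ => 2 * cR n)
        ((Real.cosh (Real.pi * z) - cR 0) + ∑ i ∈ Finset.range 1, 2 * cR i) := by
      simp only [Finset.range_one, Finset.sum_singleton, Nat.cast_zero]
      convert h2 using 1; ring
    have h3' := (hasSum_nat_add_iff (f := fun n:ℕ => 2 * cR n) 1).mpr h2'
    have heq : (fun n:ℕ => 2 * cR ((n+1:ℕ):ℤ)) = fun n:ℕ => 2 * cR ((n:ℤ)+1) := by
      funext n; push_cast; norm_num
    exact heq ▸ h3'
  have h4 : HasSum (fun n:ℕ => z / (z^2 + ((n:ℝ)+1)^2))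
      (Real.pi / (2*K) * (Real.cosh (Real.pi * z) - cR 0)) := by
    have heq : (fun n:ℕ => Real.pi / (2*K) * (2 * cR ((n:ℤ)+1)))
        = fun n:ℕ => z / (z^2 + ((n:ℝ)+1)^2) := by
      funext n
      rw [hcRdef]
      have hd : z^2 + ((n:ℝ)+1)^2 ≠ 0 := by positivity
      push_cast
      field_simp
    exact heq ▸ (h3.mul_left (Real.pi / (2*K)))
  rw [h4.tsum_eq, hcRdef]
  have hz2 : z^2 ≠ 0 := pow_ne_zero 2 hz
  field_simp
  ring
end
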